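/- arXiv:1808.02120 — 2 statements merged into one kernel-verified Lean document; each statement's English description precedes it below -/
import Mathlib

section
/- Let S be a K×K real matrix that is block diagonal with blocks S^{(b)}, 1 ≤ b ≤ B, where each block S^{(b)} is a bidiagonal matrix with all diagonal entries equal to −μ_b and all superdiagonal entries equal to μ_b, for distinct positive reals μ_1, …, μ_B. Then every eigenvector v of Sᵀ satisfies vᵀ1 ≠ 0, where 1 is the all-ones vector. -/
open Matrix

theorem stmt8 {B : ℕ} (Kb : Fin B → ℕ) (hKb : ∀ b, 0 < Kb b)
    (μ : Fin B → ℝ) (hμ : ∀ b, 0 < μ b) (hμinj : Function.Injective μ)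
    (S : Matrix (Σ b, Fin (Kb b)) (Σ b, Fin (Kb b)) ℝ)
    (hSdiag : ∀ (b : Fin B) (i j : Fin (Kb b)),
      S ⟨b, i⟩ ⟨b, j⟩ = if j = i then -μ b
        else if (j : ℕ) = (i : ℕ) + 1 then μ b else 0)
    (hSoff : ∀ (b b' : Fin B) (i : Fin (Kb b)) (j : Fin (Kb b')),
      b ≠ b' → S ⟨b, i⟩ ⟨b', j⟩ = 0)
    (v : (Σ b, Fin (Kb b)) → ℝ) (lam : ℝ) (hv : v ≠ 0)
    (heig : Sᵀ.mulVec v = lam • v) :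
    ∑ i, v i ≠ 0 := by
  classical
  -- pointwise eigenvalue equation restricted to a block
  have eq1 : ∀ (b : Fin B) (j : Fin (Kb b)),
      (∑ i : Fin (Kb b), S ⟨b, i⟩ ⟨b, j⟩ * v ⟨b, i⟩) = lam * v ⟨b, j⟩ := by
    intro b j
    have h := congrFun heig ⟨b, j⟩
    simp only [mulVec, dotProduct, Pi.smul_apply, smul_eq_mul, transpose_apply] at h
    rw [← h, ← Finset.univ_sigma_univ, Finset.sum_sigma]
    refine (Finset.sum_eq_single_of_mem
      (f := fun b' => ∑ i : Fin (Kb b'), S ⟨b', i⟩ ⟨b, j⟩ * v ⟨b', i⟩)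
      b (Finset.mem_univ b) (fun b' _ hb' => ?_)).symm
    exact Finset.sum_eq_zero fun i _ => by rw [hSoff b' b i j hb', zero_mul]
  -- equation at the first index of a block
  have E0 : ∀ (b : Fin B) (j : Fin (Kb b)), (j : ℕ) = 0 →
      -μ b * v ⟨b, j⟩ = lam * v ⟨b, j⟩ := by
    intro b j hj
    have h := eq1 b j
    rw [Finset.sum_eq_single j (fun i _ hi => ?_)
      (fun h => absurd (Finset.mem_univ j) h)] at h
    · rwa [hSdiag, if_pos rfl] at h
    · rw [hSdiag, if_neg (fun hji => hi hji.symm), if_neg (by omega), zero_mul]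
  -- equation at an interior index
  have E1 : ∀ (b : Fin B) (i j : Fin (Kb b)), (j : ℕ) = (i : ℕ) + 1 →
      μ b * v ⟨b, i⟩ + -μ b * v ⟨b, j⟩ = lam * v ⟨b, j⟩ := by
    intro b i j hij
    have h := eq1 b j
    have hne : i ≠ j := by intro h; subst h; omega
    rw [Finset.sum_eq_add_of_mem i j (Finset.mem_univ _) (Finset.mem_univ _) hne
      (fun c _ hc => ?_)] at h
    · rw [hSdiag, hSdiag, if_neg (Ne.symm hne), if_pos hij, if_pos rfl] at h
      exact h
    · have hci : (c : ℕ) ≠ (i : ℕ) := fun h => hc.1 (Fin.ext h)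
      rw [hSdiag, if_neg (fun h => hc.2 h.symm), if_neg (by omega), zero_mul]
  -- if a block has a nonzero entry, then lam = -μ b
  have lamEq : ∀ b : Fin B, (∃ i, v ⟨b, i⟩ ≠ 0) → lam = -μ b := by
    intro b hb
    have hP : ∃ n, ∃ h : n < Kb b, v ⟨b, ⟨n, h⟩⟩ ≠ 0 := by
      obtain ⟨i, hi⟩ := hb; exact ⟨i, i.2, by simpa using hi⟩
    obtain ⟨hlt, hvn⟩ := Nat.find_spec hP
    set n := Nat.find hP with hn
    have hmin : ∀ m (h : m < Kb b), m < n → v ⟨b, ⟨m, h⟩⟩ = 0 := by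
      intro m h hm
      by_contra hc
      exact Nat.find_min hP hm ⟨h, hc⟩
    rcases Nat.eq_zero_or_pos n with h0 | h1
    · exact (mul_right_cancel₀ hvn (E0 b ⟨n, hlt⟩ h0)).symm
    · have hlt' : n - 1 < Kb b := by omega
      have hE := E1 b ⟨n - 1, hlt'⟩ ⟨n, hlt⟩ (by simp; omega)
      rw [hmin (n - 1) hlt' (by omega), mul_zero, zero_add] at hE
      exact (mul_right_cancel₀ hvn hE).symm
  -- get a block with a nonzero entry
  obtain ⟨⟨b0, j0⟩, hj0⟩ : ∃ x, v x ≠ 0 := Function.ne_iff.mp hv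
  have hlam : lam = -μ b0 := lamEq b0 ⟨j0, hj0⟩
  -- all entries outside block b0 vanish
  have hother : ∀ (b : Fin B) (i : Fin (Kb b)), b ≠ b0 → v ⟨b, i⟩ = 0 := by
    intro b i hb
    by_contra hc
    have : lam = -μ b := lamEq b ⟨i, hc⟩
    exact hb (hμinj (by linarith [this, hlam]))
  -- inside block b0, all entries before the last vanish
  have hbefore : ∀ i : Fin (Kb b0), (i : ℕ) + 1 < Kb b0 → v ⟨b0, i⟩ = 0 := by
    intro i hi
    have := E1 b0 i ⟨(i : ℕ) + 1, hi⟩ rfl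
    rw [hlam] at this
    have h2 : μ b0 * v ⟨b0, i⟩ = 0 := by linarith
    exact (mul_eq_zero.mp h2).resolve_left (hμ b0).ne'
  -- the last index of block b0
  have hlast : Kb b0 - 1 < Kb b0 := by have := hKb b0; omega
  set L : Fin (Kb b0) := ⟨Kb b0 - 1, hlast⟩ with hL
  have hzero : ∀ x : (Σ b, Fin (Kb b)), x ≠ ⟨b0, L⟩ → v x = 0 := by
    rintro ⟨b, i⟩ hx
    by_cases hb : b = b0
    · subst hb
      have hiL : i ≠ L := fun h => hx (by rw [h])
      have : (i : ℕ) + 1 < Kb b := by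
        have := i.2
        have : (i : ℕ) ≠ Kb b - 1 := fun h => hiL (Fin.ext h)
        omega
      exact hbefore i this
    · exact hother b i hb
  have hsum : ∑ i, v i = v ⟨b0, L⟩ :=
    Finset.sum_eq_single_of_mem _ (Finset.mem_univ _) (fun x _ hx => hzero x hx)
  rw [hsum]
  have hj0L : j0 = L := by
    by_contra hc
    exact hj0 (hzero ⟨b0, j0⟩ (fun h => hc (eq_of_heq (Sigma.mk.inj_iff.mp h).2)))
  rw [← hj0L]; exact hj0
end

section
/- Let S be a K×K real matrix as above (block diagonal with bidiagonal blocks of distinct negative rates). Then the pair (S, 1) is controllable: there is no nonzero vector y ∈ ℝ^K with yᵀ exp(Sσ) 1 = 0 for all σ ≥ 0. Equivalently, the only y with yᵀ S^j 1 = 0 for all j = 0, 1, ..., K−1 is y = 0. -/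
open Matrix Polynomial

namespace Stmt9Aux

noncomputable def shiftM (n : ℕ) : Matrix (Fin n) (Fin n) ℝ :=
  Matrix.of fun i j => if (j : ℕ) = (i : ℕ) + 1 then 1 else 0

lemma sum_indicator (n c : ℕ) :
    (∑ j : Fin n, if (j : ℕ) = c then (1 : ℝ) else 0) = if c < n then 1 else 0 := by
  by_cases h : c < n
  · rw [if_pos h, Finset.sum_eq_single (⟨c, h⟩ : Fin n)]
    · simp
    · intro j _ hj
      rw [if_neg]
      simpa [Fin.ext_iff] using hj
    · simp
  · rw [if_neg h, Finset.sum_eq_zero]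
    intro j _
    rw [if_neg]
    have := j.isLt
    omega

lemma shiftM_pow (n m : ℕ) (i j : Fin n) :
    (shiftM n ^ m) i j = if (j : ℕ) = (i : ℕ) + m then 1 else 0 := by
  induction m generalizing j with
  | zero =>
    simp only [pow_zero, Matrix.one_apply, Nat.add_zero, Fin.ext_iff]
    exact if_congr eq_comm rfl rfl
  | succ m ih =>
    rw [pow_succ, Matrix.mul_apply]
    by_cases h : (j : ℕ) = (i : ℕ) + (m + 1)
    · rw [if_pos h]
      have hk : (i : ℕ) + m < n := by have := j.isLt; omega
      rw [Finset.sum_eq_single (⟨(i : ℕ) + m, hk⟩ : Fin n)]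
      · rw [ih]
        have h' : (j : ℕ) = (i : ℕ) + m + 1 := by omega
        simp [shiftM, h']
      · intro k _ hk'
        rw [ih, if_neg, zero_mul]
        simpa [Fin.ext_iff] using hk'
      · simp
    · rw [if_neg h, Finset.sum_eq_zero]
      intro k _
      rw [ih]
      by_cases hk : (k : ℕ) = (i : ℕ) + m
      · rw [if_pos hk, one_mul]
        simp only [shiftM, Matrix.of_apply]
        rw [if_neg (by omega)]
      · rw [if_neg hk, zero_mul]

lemma shiftM_pow_zero (n m : ℕ) (h : n ≤ m) : shiftM n ^ m = 0 := by
  ext i j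
  rw [shiftM_pow, Matrix.zero_apply, if_neg]
  have := j.isLt
  omega

lemma shiftM_mulVec_one (n m : ℕ) (i : Fin n) :
    (shiftM n ^ m).mulVec (fun _ => (1 : ℝ)) i = if (i : ℕ) + m < n then 1 else 0 := by
  simp only [Matrix.mulVec, dotProduct, shiftM_pow, mul_one]
  exact sum_indicator n ((i : ℕ) + m)

lemma commute_aeval {A : Type*} [CommRing R] [Ring A] [Algebra R A] {a b : A}
    (h : Commute a b) (p : R[X]) : Commute (Polynomial.aeval a p) b := by
  induction p using Polynomial.induction_on' with
  | add f g hf hg => rw [map_add]; exact hf.add_left hg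
  | monomial k c =>
    rw [Polynomial.aeval_monomial]
    exact Commute.mul_left (Algebra.commutes c b) (h.pow_left k)

lemma dot_sum_smul {ι : Type*} [Fintype ι] (y w : ι → ℝ) (s : Finset ℕ)
    (f : ℕ → ℝ) (M : ℕ → Matrix ι ι ℝ) :
    y ⬝ᵥ (∑ i ∈ s, f i • M i).mulVec w = ∑ i ∈ s, f i * (y ⬝ᵥ (M i).mulVec w) := by
  classical
  induction s using Finset.induction_on with
  | empty => simp [Matrix.zero_mulVec]
  | insert _ _ hx ih =>
    rw [Finset.sum_insert hx, Finset.sum_insert hx, Matrix.add_mulVec, dotProduct_add,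
      Matrix.smul_mulVec, dotProduct_smul, smul_eq_mul, ih]

lemma blockDiagonal'_mulVec_dot {B : ℕ} {Kb : Fin B → ℕ}
    (M : ∀ b, Matrix (Fin (Kb b)) (Fin (Kb b)) ℝ) (y : (Σ b, Fin (Kb b)) → ℝ) :
    y ⬝ᵥ (blockDiagonal' M).mulVec (fun _ => 1) =
      ∑ b, (fun i => y ⟨b, i⟩) ⬝ᵥ (M b).mulVec (fun _ => 1) := by
  classical
  have hmv : ∀ (b : Fin B) (i : Fin (Kb b)),
      (blockDiagonal' M).mulVec (fun _ => 1) ⟨b, i⟩ = (M b).mulVec (fun _ => 1) i := by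
    intro b i
    simp only [Matrix.mulVec, dotProduct]
    rw [← Finset.univ_sigma_univ, Finset.sum_sigma]
    rw [Finset.sum_eq_single b]
    · exact Finset.sum_congr rfl fun j _ => by rw [Matrix.blockDiagonal'_apply_eq]
    · intro b' _ hb'
      apply Finset.sum_eq_zero
      intro j _
      rw [Matrix.blockDiagonal'_apply_ne _ _ _ (Ne.symm hb'), zero_mul]
    · intro h; exact absurd (Finset.mem_univ b) h
  simp only [dotProduct]
  rw [← Finset.univ_sigma_univ, Finset.sum_sigma]
  exact Finset.sum_congr rfl fun b _ => Finset.sum_congr rfl fun i _ => by rw [hmv]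

end Stmt9Aux

theorem stmt9 {B : ℕ} (Kb : Fin B → ℕ) (hKb : ∀ b, 0 < Kb b)
    (μ : Fin B → ℝ) (hμ : ∀ b, 0 < μ b) (hμinj : Function.Injective μ)
    (S : Matrix (Σ b, Fin (Kb b)) (Σ b, Fin (Kb b)) ℝ)
    (hSdiag : ∀ (b : Fin B) (i j : Fin (Kb b)),
      S ⟨b, i⟩ ⟨b, j⟩ = if j = i then -μ b
        else if (j : ℕ) = (i : ℕ) + 1 then μ b else 0)
    (hSoff : ∀ (b b' : Fin B) (i : Fin (Kb b)) (j : Fin (Kb b')),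
      b ≠ b' → S ⟨b, i⟩ ⟨b', j⟩ = 0) :
    (∀ y : (Σ b, Fin (Kb b)) → ℝ,
      (∀ σ : ℝ, 0 ≤ σ →
        y ⬝ᵥ (NormedSpace.exp (σ • S)).mulVec (fun _ => 1) = 0) → y = 0) ∧
    (∀ y : (Σ b, Fin (Kb b)) → ℝ,
      (∀ j < Fintype.card (Σ b, Fin (Kb b)),
        y ⬝ᵥ (S ^ j).mulVec (fun _ => 1) = 0) → y = 0) := by
  classical
  set D : ∀ b, Matrix (Fin (Kb b)) (Fin (Kb b)) ℝ :=
    fun b => μ b • Stmt9Aux.shiftM (Kb b) - μ b • 1 with hD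
  have hDadd : ∀ b, D b + μ b • 1 = μ b • Stmt9Aux.shiftM (Kb b) := by
    intro b; rw [hD]; exact sub_add_cancel _ _
  have hS : S = blockDiagonal' D := by
    ext ⟨b, i⟩ ⟨b', j⟩
    by_cases h : b = b'
    · subst h
      rw [Matrix.blockDiagonal'_apply_eq, hSdiag]
      simp only [hD, Matrix.sub_apply, Matrix.smul_apply, Matrix.one_apply, Stmt9Aux.shiftM,
        Matrix.of_apply, smul_eq_mul]
      rcases eq_or_ne j i with rfl | hji
      · rw [if_pos rfl, if_pos rfl, if_neg (by omega)]
        ring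
      · rw [if_neg hji, if_neg (Ne.symm hji)]
        by_cases h2 : (j : ℕ) = (i : ℕ) + 1
        · simp only [h2, if_true, if_pos rfl]; ring
        · simp only [if_neg h2]; ring
    · rw [hSoff b b' i j h, Matrix.blockDiagonal'_apply_ne _ _ _ h]
  -- core lemma
  have hcore : ∀ y : (Σ b, Fin (Kb b)) → ℝ,
      (∀ j : ℕ, y ⬝ᵥ (S ^ j).mulVec (fun _ => 1) = 0) → y = 0 := by
    intro y hy
    have hp : ∀ p : ℝ[X], y ⬝ᵥ (aeval S p).mulVec (fun _ => 1) = 0 := by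
      intro p
      rw [Polynomial.aeval_eq_sum_range, Stmt9Aux.dot_sum_smul]
      simp [hy]
    have hpow : ∀ k : ℕ, S ^ k = blockDiagonal' fun b => D b ^ k := by
      intro k
      induction k with
      | zero => exact (Matrix.blockDiagonal'_one).symm
      | succ k ihk =>
        rw [pow_succ, ihk, hS, ← Matrix.blockDiagonal'_mul]
        exact congrArg _ (funext fun b => (pow_succ _ _).symm)
    have haeval : ∀ p : ℝ[X], aeval S p = blockDiagonal' fun b => aeval (D b) p := by
      intro p
      induction p using Polynomial.induction_on' with
      | add f g hf hg =>
        rw [map_add, hf, hg, ← Matrix.blockDiagonal'_add]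
        exact congrArg _ (funext fun b => (map_add (aeval (D b)) f g).symm)
      | monomial k c =>
        rw [Polynomial.aeval_monomial, hpow, ← Algebra.smul_def, ← Matrix.blockDiagonal'_smul]
        exact congrArg _ (funext fun b => by
          rw [Pi.smul_apply, Polynomial.aeval_monomial, ← Algebra.smul_def])
    funext x
    obtain ⟨b, i⟩ := x
    show y ⟨b, i⟩ = 0
    set q : ℝ[X] := ∏ b' ∈ Finset.univ.erase b, (X + C (μ b')) ^ (Kb b') with hq
    have hcommAN : Commute (D b) (Stmt9Aux.shiftM (Kb b)) := by
      rw [hD]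
      exact (((Commute.refl (Stmt9Aux.shiftM (Kb b))).smul_left (μ b)).sub_left
        (((Commute.one_left (Stmt9Aux.shiftM (Kb b))).smul_left (μ b))))
    have hcommQN : Commute (aeval (D b) q) (Stmt9Aux.shiftM (Kb b)) :=
      Stmt9Aux.commute_aeval hcommAN q
    have hceval : q.eval (-μ b) ≠ 0 := by
      rw [hq, Polynomial.eval_prod]
      rw [Finset.prod_ne_zero_iff]
      intro b' hb'
      simp only [Polynomial.eval_pow, Polynomial.eval_add, Polynomial.eval_X, Polynomial.eval_C]
      apply pow_ne_zero
      have hne : μ b' ≠ μ b := fun h => (Finset.mem_erase.mp hb').1 (hμinj h)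
      intro h0; apply hne; linarith
    have hQunit : IsUnit (aeval (D b) q) := by
      obtain ⟨r, hr⟩ := Polynomial.X_sub_C_dvd_sub_C_eval (a := -μ b) (p := q)
      have hq' : q = C (q.eval (-μ b)) + (X + C (μ b)) * r := by
        have hXC : X - C (-μ b) = X + C (μ b) := by rw [map_neg, sub_neg_eq_add]
        rw [← hXC, ← hr]; ring
      have hQeq : aeval (D b) q = (q.eval (-μ b)) • 1 +
          (μ b • Stmt9Aux.shiftM (Kb b)) * aeval (D b) r := by
        conv_lhs => rw [hq']
        rw [map_add, _root_.map_mul, Polynomial.aeval_C, map_add, Polynomial.aeval_X,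
          Polynomial.aeval_C, Algebra.algebraMap_eq_smul_one, Algebra.algebraMap_eq_smul_one,
          hDadd b]
      rw [hQeq]
      have hnil : IsNilpotent ((μ b • Stmt9Aux.shiftM (Kb b)) * aeval (D b) r) := by
        rw [smul_mul_assoc]
        refine IsNilpotent.smul ?_ (μ b)
        exact Commute.isNilpotent_mul_right (Stmt9Aux.commute_aeval hcommAN r).symm
          ⟨Kb b, Stmt9Aux.shiftM_pow_zero (Kb b) (Kb b) le_rfl⟩
      have hu : IsUnit ((q.eval (-μ b)) • (1 : Matrix (Fin (Kb b)) (Fin (Kb b)) ℝ)) := by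
        rw [← Algebra.algebraMap_eq_smul_one]
        exact (isUnit_iff_ne_zero.mpr hceval).map (algebraMap ℝ _)
      exact hnil.isUnit_add_left_of_commute hu
        ((Commute.one_right _).smul_right (q.eval (-μ b)))
    have hkey : ∀ m : ℕ, (fun i => y ⟨b, i⟩) ⬝ᵥ
        ((aeval (D b) q) * (Stmt9Aux.shiftM (Kb b)) ^ m).mulVec (fun _ => 1) = 0 := by
      intro m
      have h1 := hp ((X + C (μ b)) ^ m * q)
      rw [haeval, Stmt9Aux.blockDiagonal'_mulVec_dot, Finset.sum_eq_single b] at h1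
      · have haevalb : aeval (D b) ((X + C (μ b)) ^ m * q) =
            (μ b ^ m) • ((aeval (D b) q) * (Stmt9Aux.shiftM (Kb b)) ^ m) := by
          rw [_root_.map_mul, map_pow, map_add, Polynomial.aeval_X, Polynomial.aeval_C,
            Algebra.algebraMap_eq_smul_one, hDadd b, _root_.smul_pow, smul_mul_assoc]
          congr 1
          exact (hcommQN.pow_right m).eq.symm
        rw [haevalb, Matrix.smul_mulVec, dotProduct_smul, smul_eq_mul] at h1
        rcases mul_eq_zero.mp h1 with h | h
        · exact absurd h (pow_ne_zero m (ne_of_gt (hμ b)))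
        · exact h
      · intro b' _ hb'
        have hz : aeval (D b') ((X + C (μ b)) ^ m * q) = 0 := by
          rw [_root_.map_mul]
          have hq0 : aeval (D b') q = 0 := by
            have hmem : b' ∈ Finset.univ.erase b :=
              Finset.mem_erase.mpr ⟨hb', Finset.mem_univ b'⟩
            rw [hq, ← Finset.mul_prod_erase _ _ hmem, _root_.map_mul]
            have hzero : aeval (D b') ((X + C (μ b')) ^ Kb b') = 0 := by
              rw [map_pow, map_add, Polynomial.aeval_X, Polynomial.aeval_C,
                Algebra.algebraMap_eq_smul_one, hDadd b', _root_.smul_pow,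
                Stmt9Aux.shiftM_pow_zero _ _ le_rfl, smul_zero]
            rw [hzero, zero_mul]
          rw [hq0, mul_zero]
        rw [hz, Matrix.zero_mulVec, dotProduct_zero]
      · intro h; exact absurd (Finset.mem_univ b) h
    set z := Matrix.vecMul (fun i => y ⟨b, i⟩) (aeval (D b) q) with hzdef
    have hzv : ∀ m : ℕ, z ⬝ᵥ (((Stmt9Aux.shiftM (Kb b)) ^ m).mulVec (fun _ => 1)) = 0 := by
      intro m
      have h2 := hkey m
      rw [← Matrix.mulVec_mulVec, dotProduct_mulVec] at h2
      exact h2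
    have hz0 : z = 0 := by
      funext i'
      show z i' = 0
      have e1 := hzv (Kb b - 1 - (i' : ℕ))
      have e2 := hzv (Kb b - (i' : ℕ))
      simp only [dotProduct, Stmt9Aux.shiftM_mulVec_one] at e1 e2
      have hsplit : z i' =
          (∑ i'', z i'' * (if (i'' : ℕ) + (Kb b - 1 - (i' : ℕ)) < Kb b then (1 : ℝ) else 0)) -
          (∑ i'', z i'' * (if (i'' : ℕ) + (Kb b - (i' : ℕ)) < Kb b then (1 : ℝ) else 0)) := by
        rw [← Finset.sum_sub_distrib, Finset.sum_eq_single i']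
        · have hi := i'.isLt
          rw [if_pos (by omega), if_neg (by omega)]
          ring
        · intro i'' _ hne
          have hi := i'.isLt
          have hii := i''.isLt
          have hnei : (i'' : ℕ) ≠ (i' : ℕ) := fun h => hne (Fin.ext h)
          by_cases hlt : (i'' : ℕ) < (i' : ℕ)
          · rw [if_pos (by omega), if_pos (by omega)]; ring
          · rw [if_neg (by omega), if_neg (by omega)]; ring
        · intro h; exact absurd (Finset.mem_univ i') h
      rw [hsplit, e1, e2, sub_zero]
    have hdet : IsUnit (aeval (D b) q).det :=
      (Matrix.isUnit_iff_isUnit_det _).mp hQunit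
    have hyb : (fun i => y ⟨b, i⟩) = 0 := by
      have h3 : Matrix.vecMul z (aeval (D b) q)⁻¹ =
          Matrix.vecMul 0 (aeval (D b) q)⁻¹ := by rw [hz0]
      rw [hzdef, Matrix.vecMul_vecMul, Matrix.mul_nonsing_inv _ hdet, Matrix.vecMul_one,
        Matrix.zero_vecMul] at h3
      exact h3
    simpa using congrFun hyb i
  constructor
  · -- exponential part
    intro y hy
    apply hcore
    set g : ℕ → ℝ → ℝ :=
      fun j t => y ⬝ᵥ ((S ^ j) * NormedSpace.exp (t • S)).mulVec (fun _ => 1) with hg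
    have hderiv : ∀ (j : ℕ) (σ : ℝ), HasDerivAt (g j) (g (j + 1) σ) σ := by
      intro j σ
      letI : SeminormedRing (Matrix (Σ b, Fin (Kb b)) (Σ b, Fin (Kb b)) ℝ) :=
        Matrix.linftyOpSemiNormedRing
      letI : NormedRing (Matrix (Σ b, Fin (Kb b)) (Σ b, Fin (Kb b)) ℝ) :=
        Matrix.linftyOpNormedRing
      letI : NormedAlgebra ℝ (Matrix (Σ b, Fin (Kb b)) (Σ b, Fin (Kb b)) ℝ) :=
        Matrix.linftyOpNormedAlgebra
      have h1 : HasDerivAt (fun t : ℝ => NormedSpace.exp (t • S))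
          (S * NormedSpace.exp (σ • S)) σ := hasDerivAt_exp_smul_const' S σ
      have h2 := h1.const_mul (S ^ j)
      let L : Matrix (Σ b, Fin (Kb b)) (Σ b, Fin (Kb b)) ℝ →ₗ[ℝ] ℝ :=
        { toFun := fun M => y ⬝ᵥ M.mulVec (fun _ => 1)
          map_add' := fun M M' => by simp [Matrix.add_mulVec, dotProduct_add]
          map_smul' := fun c M => by simp [Matrix.smul_mulVec, dotProduct_smul] }
      have h3 := (LinearMap.toContinuousLinearMap L).hasFDerivAt.comp_hasDerivAt σ h2
      have h4 : (S ^ j) * (S * NormedSpace.exp (σ • S)) =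
          (S ^ (j + 1)) * NormedSpace.exp (σ • S) := by
        rw [← mul_assoc, ← pow_succ]
      rw [hg]
      have h5 : g (j + 1) σ = LinearMap.toContinuousLinearMap L
          ((S ^ j) * (S * NormedSpace.exp (σ • S))) := by
        rw [h4]; rfl
      rw [hg] at h5
      rw [h5]; exact h3
    have hgj : ∀ j, ∀ σ : ℝ, 0 ≤ σ → g j σ = 0 := by
      intro j
      induction j with
      | zero =>
        intro σ hσ
        have := hy σ hσ
        rw [hg]
        simpa [pow_zero, one_mul] using this
      | succ j ih =>
        have hpos : ∀ σ : ℝ, 0 < σ → g (j + 1) σ = 0 := by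
          intro σ hσ
          have heq : g j =ᶠ[nhds σ] fun _ => 0 := by
            filter_upwards [Ioi_mem_nhds hσ] with x hx
            exact ih x (le_of_lt hx)
          have h0 : HasDerivAt (g j) 0 σ :=
            (hasDerivAt_const σ (0 : ℝ)).congr_of_eventuallyEq heq
          exact HasDerivAt.unique (hderiv j σ) h0
        intro σ hσ
        rcases eq_or_lt_of_le hσ with h | h
        · subst h
          have t1 : Filter.Tendsto (g (j + 1)) (nhdsWithin 0 (Set.Ioi 0))
              (nhds (g (j + 1) 0)) :=
            ((hderiv (j + 1) 0).continuousAt).continuousWithinAt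
          have t2 : Filter.Tendsto (g (j + 1)) (nhdsWithin 0 (Set.Ioi 0)) (nhds 0) := by
            have hev : (fun _ => (0 : ℝ)) =ᶠ[nhdsWithin (0:ℝ) (Set.Ioi 0)] g (j + 1) := by
              filter_upwards [self_mem_nhdsWithin] with x hx
              exact (hpos x hx).symm
            exact Filter.Tendsto.congr' hev tendsto_const_nhds
          exact tendsto_nhds_unique t1 t2
        · exact hpos σ h
    intro j
    have := hgj j 0 le_rfl
    rw [hg] at this
    simpa [zero_smul, NormedSpace.exp_zero, mul_one] using this
  · -- polynomial part
    intro y hy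
    apply hcore
    set K := Fintype.card (Σ b, Fin (Kb b)) with hK
    have hP : S.charpoly.Monic := Matrix.charpoly_monic S
    have hdeg : S.charpoly.natDegree = K := Matrix.charpoly_natDegree_eq_dim S
    have hSK : S ^ K = ∑ i ∈ Finset.range K, (-(S.charpoly.coeff i)) • S ^ i := by
      have h1 : (aeval S) S.charpoly =
          ∑ i ∈ Finset.range (K + 1), S.charpoly.coeff i • S ^ i := by
        rw [Polynomial.aeval_eq_sum_range, hdeg]
      rw [Matrix.aeval_self_charpoly] at h1
      rw [Finset.sum_range_succ] at h1
      have hcK : S.charpoly.coeff K = 1 := by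
        rw [← hdeg]; exact hP.coeff_natDegree
      rw [hcK, one_smul] at h1
      rw [add_comm] at h1
      have h2 : S ^ K = -∑ i ∈ Finset.range K, S.charpoly.coeff i • S ^ i :=
        eq_neg_of_add_eq_zero_left h1.symm
      rw [h2, ← Finset.sum_neg_distrib]
      exact Finset.sum_congr rfl fun i _ => (neg_smul _ _).symm
    have hall : ∀ j : ℕ, y ⬝ᵥ (S ^ j).mulVec (fun _ => 1) = 0 := by
      intro j
      induction j using Nat.strong_induction_on with
      | _ j ih =>
        by_cases hj : j < K
        · exact hy j hj
        · push_neg at hj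
          obtain ⟨t, rfl⟩ := Nat.exists_eq_add_of_le hj
          have hexp : S ^ (K + t) = ∑ i ∈ Finset.range K,
              (-(S.charpoly.coeff i)) • S ^ (i + t) := by
            rw [pow_add, hSK, Finset.sum_mul]
            exact Finset.sum_congr rfl fun i _ => by rw [smul_mul_assoc, ← pow_add]
          rw [hexp, Stmt9Aux.dot_sum_smul]
          apply Finset.sum_eq_zero
          intro i hi
          rw [ih (i + t) (by have := Finset.mem_range.mp hi; omega), mul_zero]
    exact hall
end
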